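/- In the hyperbolic plane, let g(t) be a family of geodesics all passing through a fixed point M, obtained by rotating a fixed geodesic g(0) by angle ρ(t) about M, with ρ differentiable. Let l be a fixed geodesic intersecting every g(t) transversally at a point p(t), at distance D(t) = d(M, p(t)) from M along g(t) and at angle θ_l(t) between g(t) and l. If f_l(t) denotes the signed arclength position of p(t) on l, then f_l'(t) = ρ'(t)·sinh(D(t))/sin(θ_l(t)). -/

import Mathlib

open Real

/-- Variation of the intersection point of a rotating geodesic pencil with a fixed
geodesic in the hyperbolic plane.  The pencil of geodesics g(t) through the fixed point M
is parametrized by the rotation angle ρ(t); the fixed geodesic l is at distance u > 0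
from M, and f(t) is the signed arclength position on l (measured from the foot of the
perpendicular from M) of the intersection point p(t) = g(t) ∩ l, at distance
D(t) = d(M, p(t)) from M and angle θ(t) between g(t) and l.  The hyperbolic right-triangle
relations cosh D = cosh u · cosh f, sin ρ = sinh f / sinh D and sin θ = sinh u / sinh D
encode this configuration.  Then f'(t) = ρ'(t) · sinh(D(t)) / sin(θ(t)). -/
theorem stmt18 (u : ℝ) (hu : 0 < u)
    (f ρ D θ : ℝ → ℝ) (t₀ f' ρ' : ℝ)
    (hD : ∀ t, Real.cosh (D t) = Real.cosh u * Real.cosh (f t))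
    (hρ : ∀ t, Real.sin (ρ t) = Real.sinh (f t) / Real.sinh (D t))
    (hρrange : ∀ t, |ρ t| < π / 2)
    (hθ : ∀ t, Real.sin (θ t) = Real.sinh u / Real.sinh (D t))
    (hθrange : ∀ t, 0 < θ t ∧ θ t < π)
    (hf' : HasDerivAt f f' t₀)
    (hρ' : HasDerivAt ρ ρ' t₀) :
    f' = ρ' * Real.sinh (D t₀) / Real.sin (θ t₀) := by
  have hsu : 0 < Real.sinh u := Real.sinh_pos_iff.2 hu
  have hcu : 1 < Real.cosh u := Real.one_lt_cosh.2 hu.ne'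
  -- basic positivity facts at each t
  have hsD : ∀ t, 0 < Real.sinh (D t) := by
    intro t
    have h1 : 1 < Real.cosh (D t) := by
      rw [hD t]
      nlinarith [Real.one_le_cosh (f t)]
    have : 0 < Real.sinh (D t) ^ 2 := by
      rw [Real.sinh_sq]; nlinarith
    have hD0 : Real.sinh (D t) ≠ 0 := by
      intro h; rw [h] at this; simp at this
    rcases lt_or_gt_of_ne hD0 with h | h
    · exfalso
      have hDneg : D t < 0 := by
        by_contra hc
        push_neg at hc
        have := Real.sinh_nonneg_iff.2 hc
        linarith
      have : Real.cosh (D t) = Real.cosh u * Real.cosh (f t) := hD t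
      -- cosh is fine; no contradiction yet; instead use sinh < 0 is fine...
      have hθt := hθ t
      have hθr := hθrange t
      have : Real.sin (θ t) > 0 := Real.sin_pos_of_pos_of_lt_pi hθr.1 hθr.2
      rw [hθt] at this
      have : Real.sinh u / Real.sinh (D t) < 0 := div_neg_of_pos_of_neg hsu h
      linarith
    · exact h
  have hcosρ : ∀ t, Real.cos (ρ t) = Real.cosh (f t) * Real.sinh u / Real.sinh (D t) := by
    intro t
    have hsDt := hsD t
    have hcf : 0 < Real.cosh (f t) := Real.cosh_pos _
    have hrng := abs_lt.1 (hρrange t)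
    have hcpos : 0 < Real.cos (ρ t) :=
      Real.cos_pos_of_mem_Ioo ⟨hrng.1, hrng.2⟩
    have hpyth := Real.sin_sq_add_cos_sq (ρ t)
    rw [hρ t] at hpyth
    have hD2 : Real.sinh (D t) ^ 2 = Real.cosh u ^ 2 * Real.cosh (f t) ^ 2 - 1 := by
      rw [Real.sinh_sq, hD t]; ring
    have hf2 : Real.sinh (f t) ^ 2 = Real.cosh (f t) ^ 2 - 1 := Real.sinh_sq (f t)
    have hu2 : Real.sinh u ^ 2 = Real.cosh u ^ 2 - 1 := Real.sinh_sq u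
    have hsq : Real.cos (ρ t) ^ 2 =
        (Real.cosh (f t) * Real.sinh u / Real.sinh (D t)) ^ 2 := by
      field_simp at hpyth ⊢
      nlinarith [hpyth]
    have hrhs : 0 < Real.cosh (f t) * Real.sinh u / Real.sinh (D t) := by positivity
    nlinarith [hsq, hcpos, hrhs]
  -- the functional identity: sinh u * tan (ρ t) = tanh (f t)
  have hkey : ∀ t, Real.sinh u * Real.tan (ρ t) = Real.tanh (f t) := by
    intro t
    have hsDt := hsD t
    have hcf : 0 < Real.cosh (f t) := Real.cosh_pos _
    rw [Real.tan_eq_sin_div_cos, Real.tanh_eq_sinh_div_cosh, hρ t, hcosρ t]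
    field_simp
  -- derivative of t ↦ tanh (f t)
  have hcf0 : 0 < Real.cosh (f t₀) := Real.cosh_pos _
  have hTanh : HasDerivAt (fun t => Real.tanh (f t))
      ((Real.cosh (f t₀) * f' * Real.cosh (f t₀) -
        Real.sinh (f t₀) * (Real.sinh (f t₀) * f')) / Real.cosh (f t₀) ^ 2) t₀ := by
    have hs : HasDerivAt (fun t => Real.sinh (f t)) (Real.cosh (f t₀) * f') t₀ :=
      (Real.hasDerivAt_sinh (f t₀)).comp t₀ hf'
    have hc : HasDerivAt (fun t => Real.cosh (f t)) (Real.sinh (f t₀) * f') t₀ :=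
      (Real.hasDerivAt_cosh (f t₀)).comp t₀ hf'
    have := hs.div hc hcf0.ne'
    simpa [Real.tanh_eq_sinh_div_cosh, Pi.div_def] using this
  -- derivative of t ↦ sinh u * tan (ρ t)
  have hrng := abs_lt.1 (hρrange t₀)
  have hcρpos : 0 < Real.cos (ρ t₀) := Real.cos_pos_of_mem_Ioo ⟨hrng.1, hrng.2⟩
  have hTan : HasDerivAt (fun t => Real.sinh u * Real.tan (ρ t))
      (Real.sinh u * (1 / Real.cos (ρ t₀) ^ 2 * ρ')) t₀ := by
    have h1 : HasDerivAt (fun t => Real.tan (ρ t)) (1 / Real.cos (ρ t₀) ^ 2 * ρ') t₀ :=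
      (Real.hasDerivAt_tan hcρpos.ne').comp t₀ hρ'
    exact h1.const_mul _
  -- the two functions are equal, hence the derivatives coincide
  have heq : (fun t => Real.sinh u * Real.tan (ρ t)) = fun t => Real.tanh (f t) := by
    funext t; exact hkey t
  rw [heq] at hTan
  have hder := hTanh.unique hTan
  -- now the algebra
  have hsDt := hsD t₀
  have hcosρ0 := hcosρ t₀
  have hθ0 := hθ t₀
  have hpyth : Real.cosh (f t₀) ^ 2 - Real.sinh (f t₀) ^ 2 = 1 := by
    have := Real.cosh_sq_sub_sinh_sq (f t₀); linarith [this]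
  rw [hθ0]
  rw [hcosρ0] at hder
  have hD2 : Real.sinh (D t₀) ^ 2 = Real.cosh u ^ 2 * Real.cosh (f t₀) ^ 2 - 1 := by
    rw [Real.sinh_sq, hD t₀]; ring
  have hf2 : Real.sinh (f t₀) ^ 2 = Real.cosh (f t₀) ^ 2 - 1 := Real.sinh_sq (f t₀)
  have hu2 : Real.sinh u ^ 2 = Real.cosh u ^ 2 - 1 := Real.sinh_sq u
  field_simp at hder ⊢
  have hne : (Real.cosh (f t₀) ^ 2 * Real.sinh u) ≠ 0 := by positivity
  apply mul_left_cancel₀ hne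
  linear_combination (Real.cosh (f t₀) ^ 2 * Real.sinh u) * hder - Real.cosh (f t₀) ^ 2 * Real.sinh u * f' * Real.sinh u * hpyth
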